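/- Define Θ recursively on nonempty lists of positive integers with a parameter t: Θ([a₁]; t) = a₁, and for m ≥ 2, Θ([a₁,...,a_m]; t) = a_m · Θ([a₁,...,a_{m-1}]; t) + t · Θ([a₁,...,a_{m-2}, a_{m-1}+a_m]; t). Then Θ([a₁,...,a_m]; t) = Σ_{k=1}^{m} t^{m-k} · Σ_{1 ≤ i_1 < ... < i_k ≤ m} (∏_{j=1}^{k-1} (i_{j+1} - i_j)) · a_{i_1} ⋯ a_{i_k}. -/

import Mathlib

open Finset

/-- The spanning tree count `Θ` of generalized pencil graphs, defined by the
recurrence `Θ([a₁]; t) = a₁` and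
`Θ([a₁,…,a_m]; t) = a_m · Θ([a₁,…,a_{m-1}]; t) + t · Θ([a₁,…,a_{m-2}, a_{m-1}+a_m]; t)`.
The list argument stores the parameters in reverse order: `[a_m, a_{m-1}, …, a₁]`. -/
def theta : List ℕ → ℕ → ℕ
  | [], _ => 1
  | [a], _ => a
  | a :: b :: l, t => a * theta (b :: l) t + t * theta ((b + a) :: l) t
  termination_by l _ => l.length


def gp : List ℕ → ℕ
  | [] => 1
  | [_] => 1
  | x :: y :: l => (y - x) * gp (y :: l)

theorem gp_prod : ∀ L : List ℕ,
    (∏ j ∈ Finset.range (L.length - 1), (L.getD (j + 1) 0 - L.getD j 0)) = gp L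
  | [] => by simp [gp]
  | [x] => by simp [gp]
  | x :: y :: l => by
    have ih := gp_prod (y :: l)
    simp only [List.length_cons, Nat.add_sub_cancel, List.getD_cons_succ] at ih ⊢
    rw [Finset.prod_range_succ']
    simp only [List.getD_cons_succ, List.getD_cons_zero]
    rw [ih, gp]
    ring

lemma sort_insert_top {s : Finset ℕ} {n : ℕ} (h : ∀ x ∈ s, x < n) :
    (insert n s).sort (· ≤ ·) = s.sort (· ≤ ·) ++ [n] := by
  have hn : n ∉ s := fun hn => lt_irrefl n (h n hn)
  apply List.Perm.eq_of_pairwise' (Finset.pairwise_sort _ _) ?_ ?_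
  · rw [List.pairwise_append]
    refine ⟨Finset.pairwise_sort _ _, by simp, ?_⟩
    intro x hx b hb
    simp only [List.mem_singleton] at hb
    subst hb
    exact le_of_lt (h x ((Finset.mem_sort _).1 hx))
  · rw [← Multiset.coe_eq_coe]
    have := Finset.sort_eq (α := ℕ) (insert n s) (· ≤ ·)
    rw [this, Finset.insert_val_of_notMem hn, ← Finset.sort_eq s (· ≤ ·)]
    exact Quot.sound (List.perm_append_singleton n _).symm


theorem gp_append (n : ℕ) : ∀ L : List ℕ, L ≠ [] →
    gp (L ++ [n]) = (n - L.getLast?.getD 0) * gp L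
  | [], h => absurd rfl h
  | [x], _ => by simp [gp]
  | x :: y :: l, _ => by
    have ih := gp_append n (y :: l) (by simp)
    simp only [List.cons_append] at ih ⊢
    rw [gp, ih, List.getLast?_cons_cons, gp]
    ring

def W (s : Finset ℕ) : ℕ := gp (s.sort (· ≤ ·))

lemma sort_ne_nil {s : Finset ℕ} (h : s.Nonempty) : s.sort (· ≤ ·) ≠ [] := by
  intro hc
  have := Finset.length_sort (α := ℕ) (· ≤ ·) (s := s)
  rw [hc] at this
  simp only [List.length_nil] at this
  exact absurd this.symm (Nat.ne_of_gt (Finset.card_pos.2 h))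

lemma sort_getLast {s : Finset ℕ} (h : s.Nonempty) :
    (s.sort (· ≤ ·)).getLast?.getD 0 = s.max' h := by
  rw [Finset.max'_eq_sorted_last, List.getLast?_eq_getElem?,
    List.getElem?_eq_getElem (by simpa using Nat.sub_lt (Finset.card_pos.mpr h) Nat.zero_lt_one)]
  rfl

lemma W_insert {s : Finset ℕ} (hne : s.Nonempty) {n : ℕ} (h : ∀ x ∈ s, x < n) :
    W (insert n s) = (n - s.max' hne) * W s := by
  rw [W, sort_insert_top h, gp_append n _ (sort_ne_nil hne), sort_getLast hne, W]

lemma max'_insert_top {s : Finset ℕ} {n : ℕ} (h : ∀ x ∈ s, x < n) (hne : (insert n s).Nonempty) :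
    (insert n s).max' hne = n := by
  apply le_antisymm
  · apply Finset.max'_le
    intro y hy
    rcases Finset.mem_insert.1 hy with rfl | hy
    · exact le_rfl
    · exact le_of_lt (h y hy)
  · exact Finset.le_max' _ _ (Finset.mem_insert_self n s)

lemma K1 {s : Finset ℕ} {n : ℕ} (h : ∀ x ∈ s, x < n) :
    W (insert (n + 1) (insert n s)) = W (insert n s) := by
  have hne : (insert n s).Nonempty := Finset.insert_nonempty _ _
  rw [W_insert hne (fun x hx => by
    rcases Finset.mem_insert.1 hx with rfl | hx
    · omega
    · exact lt_trans (h x hx) (Nat.lt_succ_self n)), max'_insert_top h hne]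
  simp

lemma K2 {s : Finset ℕ} (hne : s.Nonempty) {m : ℕ} (h : ∀ x ∈ s, x ≤ m) :
    W (insert (m + 2) s) = W (insert (m + 1) s) + W s := by
  have hM := s.max'_mem hne
  have hMle : s.max' hne ≤ m := h _ hM
  rw [W_insert hne (fun x hx => by have := h x hx; omega),
    W_insert hne (fun x hx => by have := h x hx; omega)]
  have : m + 2 - s.max' hne = (m + 1 - s.max' hne) + 1 := by omega
  rw [this, add_mul, one_mul]

def Ps (a : ℕ → ℕ) (t m : ℕ) : ℕ :=
  ∑ s ∈ (Finset.Icc 1 m).powerset, t ^ (m - s.card) * (W s * ∏ i ∈ s, a i)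

def Hs (a : ℕ → ℕ) (t m : ℕ) : ℕ :=
  ∑ s ∈ (Finset.Icc 1 m).powerset, t ^ (m - s.card) * (W (insert (m + 1) s) * ∏ i ∈ s, a i)

lemma Icc_succ_insert (m : ℕ) : Finset.Icc 1 (m + 1) = insert (m + 1) (Finset.Icc 1 m) := by
  ext x
  simp only [Finset.mem_Icc, Finset.mem_insert]
  omega

lemma not_mem_Icc_succ (m : ℕ) : m + 1 ∉ Finset.Icc 1 m := by
  simp only [Finset.mem_Icc]
  omega

lemma mem_ps {m : ℕ} {s : Finset ℕ} (hs : s ∈ (Finset.Icc 1 m).powerset) :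
    (∀ x ∈ s, x ≤ m) ∧ s.card ≤ m ∧ m + 1 ∉ s := by
  rw [Finset.mem_powerset] at hs
  refine ⟨fun x hx => (Finset.mem_Icc.1 (hs hx)).2, ?_, fun hc => ?_⟩
  · have := Finset.card_le_card hs
    simpa using this
  · exact absurd (hs hc) (not_mem_Icc_succ m)

lemma Ps_succ (a : ℕ → ℕ) (t m : ℕ) :
    Ps a t (m + 1) = t * Ps a t m + a (m + 1) * Hs a t m := by
  rw [Ps, Icc_succ_insert, Finset.sum_powerset_insert (not_mem_Icc_succ m)]
  congr 1
  · rw [Ps, Finset.mul_sum]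
    apply Finset.sum_congr rfl
    intro s hs
    obtain ⟨-, hcard, -⟩ := mem_ps hs
    rw [show m + 1 - s.card = (m - s.card) + 1 by omega, pow_succ]
    ring
  · rw [Hs, Finset.mul_sum]
    apply Finset.sum_congr rfl
    intro s hs
    obtain ⟨-, hcard, hns⟩ := mem_ps hs
    rw [Finset.card_insert_of_notMem hns, Finset.prod_insert hns,
      show m + 1 - (s.card + 1) = m - s.card by omega]
    ring

lemma Hs_succ (a : ℕ → ℕ) (t m : ℕ) :
    Hs a t (m + 1) + t ^ (m + 1) = t * Hs a t m + Ps a t (m + 1) := by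
  rw [Hs, Icc_succ_insert, Finset.sum_powerset_insert (not_mem_Icc_succ m), Ps_succ]
  have h2 : ∑ s ∈ (Finset.Icc 1 m).powerset,
      t ^ (m + 1 - (insert (m + 1) s).card) *
        (W (insert (m + 1 + 1) (insert (m + 1) s)) * ∏ i ∈ insert (m + 1) s, a i) =
      a (m + 1) * Hs a t m := by
    rw [Hs, Finset.mul_sum]
    apply Finset.sum_congr rfl
    intro s hs
    obtain ⟨hle, hcard, hns⟩ := mem_ps hs
    rw [Finset.card_insert_of_notMem hns, Finset.prod_insert hns,
      show m + 1 - (s.card + 1) = m - s.card by omega,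
      K1 (fun x hx => lt_of_le_of_lt (hle x hx) (Nat.lt_succ_self m))]
    ring
  rw [h2]
  have h1 : ∑ s ∈ (Finset.Icc 1 m).powerset,
      t ^ (m + 1 - s.card) * (W (insert (m + 1 + 1) s) * ∏ i ∈ s, a i) + t ^ (m + 1) =
      t * Hs a t m + t * Ps a t m := by
    rw [Hs, Ps, Finset.mul_sum, Finset.mul_sum, ← Finset.sum_add_distrib]
    have hmem : (∅ : Finset ℕ) ∈ (Finset.Icc 1 m).powerset := Finset.empty_mem_powerset _
    rw [← Finset.add_sum_erase _ _ hmem, ← Finset.add_sum_erase _ _ hmem]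
    have he : t ^ (m + 1 - (∅ : Finset ℕ).card) *
        (W (insert (m + 1 + 1) ∅) * ∏ i ∈ (∅ : Finset ℕ), a i) = t ^ (m + 1) := by
      simp [W, gp]
    have he2 : t * (t ^ (m - (∅ : Finset ℕ).card) *
          (W (insert (m + 1) ∅) * ∏ i ∈ (∅ : Finset ℕ), a i)) +
        t * (t ^ (m - (∅ : Finset ℕ).card) * (W ∅ * ∏ i ∈ (∅ : Finset ℕ), a i)) =
        t ^ (m + 1) + t ^ (m + 1) := by
      simp [W, gp, pow_succ]
      ring
    rw [add_right_comm, he, he2]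
    congr 1
    apply Finset.sum_congr rfl
    intro s hs
    have hsne : s.Nonempty := Finset.nonempty_of_ne_empty (Finset.ne_of_mem_erase hs)
    obtain ⟨hle, hcard, hns⟩ := mem_ps (Finset.mem_of_mem_erase hs)
    rw [K2 hsne hle, show m + 1 - s.card = (m - s.card) + 1 by omega, pow_succ]
    ring
  omega

def AB : List ℕ → ℕ → ℕ × ℕ
  | [], _ => (1, 0)
  | b :: l, t =>
    ((b + t) * (AB l t).1 + (AB l t).2, t * (b * (AB l t).1 + (AB l t).2))

lemma theta_eq (t : ℕ) : ∀ (l : List ℕ) (x : ℕ),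
    theta (x :: l) t = x * (AB l t).1 + (AB l t).2 := by
  intro l
  induction l with
  | nil => intro x; simp [theta, AB]
  | cons b l ih =>
    intro x
    rw [show theta (x :: b :: l) t
        = x * theta (b :: l) t + t * theta ((b + x) :: l) t from by rw [theta],
      ih b, ih (b + x), AB]
    ring

def lst (a : ℕ → ℕ) (m : ℕ) : List ℕ := (List.range m).map fun j => a (m - j)

lemma lst_succ (a : ℕ → ℕ) (m : ℕ) : lst a (m + 1) = a (m + 1) :: lst a m := by
  rw [lst, lst, List.range_succ_eq_map, List.map_cons, List.map_map]
  simp [Function.comp_def, Nat.succ_sub_succ]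

lemma main_pair (t : ℕ) (a : ℕ → ℕ) : ∀ m : ℕ,
    (AB (lst a m) t).1 = Hs a t m ∧ (AB (lst a m) t).2 + t ^ (m + 1) = t * Ps a t m
  | 0 => by
    constructor
    · simp [lst, AB, Hs, W, gp]
    · simp [lst, AB, Ps, W, gp]
  | m + 1 => by
    obtain ⟨h1, h2⟩ := main_pair t a m
    rw [lst_succ, AB, h1]
    constructor
    · dsimp only
      apply Nat.add_right_cancel (m := t ^ (m + 1))
      rw [Hs_succ, Ps_succ, ← h2]
      ring
    · dsimp only
      rw [Ps_succ, ← h2]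
      ring

lemma theta_Ps (t : ℕ) (a : ℕ → ℕ) (m : ℕ) :
    theta (lst a (m + 1)) t + t ^ (m + 1) = Ps a t (m + 1) := by
  obtain ⟨h1, h2⟩ := main_pair t a m
  rw [lst_succ, theta_eq, h1, Ps_succ]
  omega

lemma rhs_eq (t : ℕ) (a : ℕ → ℕ) (m : ℕ) :
    (∑ k ∈ Finset.Icc 1 m, t ^ (m - k) *
        ∑ s ∈ (Finset.Icc 1 m).powersetCard k,
          (∏ j ∈ Finset.range (k - 1),
            ((s.sort (· ≤ ·)).getD (j + 1) 0 - (s.sort (· ≤ ·)).getD j 0)) *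
          ∏ i ∈ s, a i) + t ^ m = Ps a t m := by
  rw [Ps, Finset.sum_powerset]
  have hcard : (Finset.Icc 1 m).card = m := by simp
  rw [hcard]
  have hr : Finset.range (m + 1) = insert 0 (Finset.Icc 1 m) := by
    ext x; simp only [Finset.mem_range, Finset.mem_insert, Finset.mem_Icc]; omega
  rw [hr, Finset.sum_insert (by simp), Finset.powersetCard_zero]
  simp only [Finset.sum_singleton, Finset.card_empty, Nat.sub_zero, Finset.prod_empty, mul_one]
  have hW : W ∅ = 1 := by rw [W, Finset.sort_empty]; rfl
  rw [hW, mul_one, add_comm]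
  congr 1
  apply Finset.sum_congr rfl
  intro k hk
  rw [Finset.mul_sum]
  apply Finset.sum_congr rfl
  intro s hs
  have hcards : s.card = k := (Finset.mem_powersetCard.1 hs).2
  have hlen : (s.sort (· ≤ ·)).length = k := by rw [Finset.length_sort, hcards]
  have hgp := gp_prod (s.sort (· ≤ ·))
  rw [hlen] at hgp
  rw [hgp, hcards, show gp (s.sort (· ≤ ·)) = W s from rfl]

/-- The recursively defined `Θ` has the closed form
`Θ([a₁,…,a_m]; t) = Σ_{k=1}^{m} t^{m-k} Σ_{1 ≤ i₁ < ⋯ < i_k ≤ m}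
(∏_{j=1}^{k-1} (i_{j+1} - i_j)) · a_{i₁} ⋯ a_{i_k}`. -/
theorem theta_closed_form (m t : ℕ) (hm : 1 ≤ m) (a : ℕ → ℕ) :
    theta ((List.range m).map fun j => a (m - j)) t =
      ∑ k ∈ Finset.Icc 1 m, t ^ (m - k) *
        ∑ s ∈ (Finset.Icc 1 m).powersetCard k,
          (∏ j ∈ Finset.range (k - 1),
            ((s.sort (· ≤ ·)).getD (j + 1) 0 - (s.sort (· ≤ ·)).getD j 0)) *
          ∏ i ∈ s, a i := by
  obtain ⟨n, rfl⟩ : ∃ n, m = n + 1 := ⟨m - 1, by omega⟩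
  apply Nat.add_right_cancel (m := t ^ (n + 1))
  calc theta ((List.range (n + 1)).map fun j => a (n + 1 - j)) t + t ^ (n + 1)
      = theta (lst a (n + 1)) t + t ^ (n + 1) := rfl
    _ = Ps a t (n + 1) := theta_Ps t a n
    _ = _ := (rhs_eq t a (n + 1)).symm
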